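/- If C is a self-dual code over F_3 of length n, then 4 divides n. -/

import Mathlib

open scoped BigOperators

/-- The dual code with respect to the standard bilinear form. -/
def dualCode {F : Type*} [Field F] {n : ℕ} (C : Submodule F (Fin n → F)) :
    Submodule F (Fin n → F) where
  carrier := {y | ∀ x ∈ C, ∑ i, x i * y i = 0}
  zero_mem' := by intro x hx; simp
  add_mem' := by
    intro y z hy hz x hx
    simp [Pi.add_apply, mul_add, Finset.sum_add_distrib, hy x hx, hz x hx]
  smul_mem' := by
    intro c y hy x hx
    simp [mul_left_comm, ← Finset.mul_sum, hy x hx]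

/-- The Hamming weight of a vector: the number of nonzero coordinates. -/
def wt {F : Type*} [Zero F] [DecidableEq F] {n : ℕ} (v : Fin n → F) : ℕ :=
  (Finset.univ.filter fun i => v i ≠ 0).card

section Aux

open Equiv in
lemma sign_sumComm_congr {α β : Type*} [DecidableEq α] [Fintype α] [DecidableEq β] [Fintype β]
    (e : α ≃ β) :
    Equiv.Perm.sign (Equiv.sumComm β β) = Equiv.Perm.sign (Equiv.sumComm α α) := by
  have h : (Equiv.sumCongr e e).permCongr (Equiv.sumComm α α) = Equiv.sumComm β β := by
    ext x; cases x <;> simp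
  rw [← h, Equiv.Perm.sign_permCongr]

open Equiv in
lemma sign_sumComm_sum {α β : Type*} [DecidableEq α] [Fintype α] [DecidableEq β] [Fintype β] :
    Equiv.Perm.sign (Equiv.sumComm (α ⊕ β) (α ⊕ β)) =
      Equiv.Perm.sign (Equiv.sumComm α α) * Equiv.Perm.sign (Equiv.sumComm β β) := by
  have h : (Equiv.sumSumSumComm α β α β).permCongr (Equiv.sumComm (α ⊕ β) (α ⊕ β)) =
      Equiv.Perm.sumCongr (Equiv.sumComm α α) (Equiv.sumComm β β) := by
    ext x; rcases x with (a | a) | (b | b) <;> rfl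
  rw [← Equiv.Perm.sign_permCongr (Equiv.sumSumSumComm α β α β), h, Equiv.Perm.sign_sumCongr]

lemma sign_sumComm_fin (k : ℕ) :
    Equiv.Perm.sign (Equiv.sumComm (Fin k) (Fin k)) = (-1) ^ k := by
  induction k with
  | zero =>
    have : (Equiv.sumComm (Fin 0) (Fin 0)) = Equiv.refl _ := by
      ext x; rcases x with a | a <;> exact a.elim0
    simp [this]
  | succ k ih =>
    rw [sign_sumComm_congr (finSumFinEquiv : Fin k ⊕ Fin 1 ≃ Fin (k + 1)),
      sign_sumComm_sum, ih]
    have h1 : (Equiv.sumComm (Fin 1) (Fin 1)) =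
        Equiv.swap (Sum.inl 0) (Sum.inr 0) := by
      ext x; rcases x with a | a <;> (rw [Fin.eq_zero a]; rfl)
    rw [h1, Equiv.Perm.sign_swap (by simp)]
    rw [pow_add, pow_one]

noncomputable section

/-- The standard bilinear form on `Fin n → F`. -/
def stdB (F : Type*) [CommRing F] (n : ℕ) : LinearMap.BilinForm F (Fin n → F) :=
  LinearMap.mk₂ F (fun x y => ∑ i, x i * y i)
    (fun x x' y => by simp [add_mul, Finset.sum_add_distrib])
    (fun c x y => by simp [Finset.mul_sum, mul_assoc])
    (fun x y y' => by simp [mul_add, Finset.sum_add_distrib])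
    (fun c x y => by simp [Finset.mul_sum, mul_left_comm])

@[simp] lemma stdB_apply {F : Type*} [CommRing F] {n : ℕ} (x y : Fin n → F) :
    stdB F n x y = ∑ i, x i * y i := rfl

lemma stdB_refl {F : Type*} [CommRing F] {n : ℕ} : (stdB F n).IsRefl := by
  intro x y hxy
  simpa [mul_comm] using hxy

lemma stdB_nondeg {F : Type*} [Field F] {n : ℕ} : (stdB F n).Nondegenerate := by
  refine LinearMap.BilinForm.Nondegenerate.ofSeparatingLeft ?_
  intro x hx
  funext i
  have := hx (Pi.single i 1)
  simpa [Pi.single_apply, mul_ite] using this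

lemma dualCode_eq_orthogonal {F : Type*} [Field F] {n : ℕ} (C : Submodule F (Fin n → F)) :
    dualCode C = (stdB F n).orthogonal C := by
  ext y
  simp only [LinearMap.BilinForm.mem_orthogonal_iff, LinearMap.BilinForm.IsOrtho, stdB_apply]
  rfl

end

end Aux

open Matrix

/-- The length of a ternary self-dual code is divisible by 4. -/
theorem typeIII_length_div_four {n : ℕ} (C : Submodule (ZMod 3) (Fin n → ZMod 3))
    (h : C = dualCode C) : 4 ∣ n := by
  classical
  set k := Module.finrank (ZMod 3) C with hkdef
  -- Step 1 : n = k + k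
  have hnk : k + k = n := by
    have h1 := LinearMap.BilinForm.finrank_add_finrank_orthogonal
      (B := stdB (ZMod 3) n) stdB_refl C
    rw [LinearMap.BilinForm.orthogonal_top_eq_bot stdB_nondeg] at h1
    rw [← dualCode_eq_orthogonal, ← h] at h1
    rw [inf_bot_eq, finrank_bot, add_zero] at h1
    simpa using h1
  -- A complement of C
  obtain ⟨D, hD⟩ := Submodule.exists_isCompl C
  have hDk : Module.finrank (ZMod 3) D = k := by
    have h2 := Submodule.finrank_add_eq_of_isCompl hD
    rw [Module.finrank_fin_fun] at h2
    omega
  let bC : Module.Basis (Fin k) (ZMod 3) C := Module.finBasisOfFinrankEq (ZMod 3) C rfl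
  let bD : Module.Basis (Fin k) (ZMod 3) D := Module.finBasisOfFinrankEq (ZMod 3) D hDk
  let b : Module.Basis (Fin k ⊕ Fin k) (ZMod 3) (Fin n → ZMod 3) :=
    (bC.prod bD).map (Submodule.prodEquivOfIsCompl C D hD)
  have hbl : ∀ i, b (Sum.inl i) = (bC i : Fin n → ZMod 3) := by
    intro i
    simp [b, Module.Basis.prod_apply, Submodule.coe_prodEquivOfIsCompl]
  have hbr : ∀ i, b (Sum.inr i) = (bD i : Fin n → ZMod 3) := by
    intro i
    simp [b, Module.Basis.prod_apply, Submodule.coe_prodEquivOfIsCompl]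
  -- Gram matrix
  let A : Matrix (Fin k ⊕ Fin k) (Fin n) (ZMod 3) := Matrix.of fun i t => b i t
  let G : Matrix (Fin k ⊕ Fin k) (Fin k ⊕ Fin k) (ZMod 3) := A * Aᵀ
  have hGapp : ∀ i j, G i j = ∑ t, b i t * b j t := by
    intro i j
    simp [G, A, Matrix.mul_apply]
  -- the Gram matrix is a square of a square matrix (after reindexing)
  let e : Fin k ⊕ Fin k ≃ Fin n := finSumFinEquiv.trans (finCongr hnk)
  let A' : Matrix (Fin k ⊕ Fin k) (Fin k ⊕ Fin k) (ZMod 3) := A.submatrix id e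
  have hGA : G = A' * A'ᵀ := by
    have h2 := Matrix.submatrix_mul_equiv A Aᵀ (id : Fin k ⊕ Fin k → Fin k ⊕ Fin k) e
      (id : Fin k ⊕ Fin k → Fin k ⊕ Fin k)
    show G = (A.submatrix id ⇑e) * (A.submatrix id ⇑e)ᵀ
    rw [Matrix.transpose_submatrix, h2, Matrix.submatrix_id_id]
  have hdetG : G.det = A'.det ^ 2 := by
    rw [hGA, Matrix.det_mul, Matrix.det_transpose, sq]
  -- block structure
  let X : Matrix (Fin k) (Fin k) (ZMod 3) := Matrix.of fun i j => G (Sum.inl i) (Sum.inr j)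
  let Y : Matrix (Fin k) (Fin k) (ZMod 3) := Matrix.of fun i j => G (Sum.inr i) (Sum.inr j)
  have hG0 : ∀ i j, G (Sum.inl i) (Sum.inl j) = 0 := by
    intro i j
    rw [hGapp, hbl, hbl]
    have hmem : (bC j : Fin n → ZMod 3) ∈ dualCode C := h ▸ (bC j).2
    exact hmem (bC i) (bC i).2
  have hGsymm : ∀ i j, G (Sum.inr i) (Sum.inl j) = G (Sum.inl j) (Sum.inr i) := by
    intro i j
    rw [hGapp, hGapp]
    exact Finset.sum_congr rfl fun t _ => mul_comm _ _
  have hsub : G.submatrix id (Equiv.sumComm (Fin k) (Fin k)) = Matrix.fromBlocks X 0 Y Xᵀ := by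
    ext i j
    rcases i with i | i <;> rcases j with j | j
    · rfl
    · exact hG0 i j
    · rfl
    · exact hGsymm i j
  -- determinant via permutation
  have hdet2 : X.det * X.det = ((-1 : ZMod 3) ^ k) * G.det := by
    have hp := Matrix.det_permute' (Equiv.sumComm (Fin k) (Fin k)) G
    rw [hsub, Matrix.det_fromBlocks_zero₁₂, sign_sumComm_fin, Matrix.det_transpose] at hp
    rw [hp]
    push_cast
    ring
  -- X is invertible
  have hX : X.det ≠ 0 := by
    intro h0
    obtain ⟨v, hv0, hv⟩ := (Matrix.exists_mulVec_eq_zero_iff).mpr h0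
    set w : Fin n → ZMod 3 := ∑ j, v j • (bD j : Fin n → ZMod 3) with hw
    have hXij : ∀ (i j : Fin k),
        X i j = ∑ t, (bC i : Fin n → ZMod 3) t * (bD j : Fin n → ZMod 3) t := by
      intro i j
      rw [show X i j = G (Sum.inl i) (Sum.inr j) from rfl, hGapp, hbl, hbr]
    have hcoord : ∀ i, ∑ t, (bC i : Fin n → ZMod 3) t * w t = 0 := by
      intro i
      have hXv : ∑ j, X i j * v j = 0 := by
        have := congrFun hv i
        simpa [Matrix.mulVec, dotProduct] using this
      calc ∑ t, (bC i : Fin n → ZMod 3) t * w t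
          = ∑ t, ∑ j, (bC i : Fin n → ZMod 3) t * (v j * (bD j : Fin n → ZMod 3) t) := by
            refine Finset.sum_congr rfl fun t _ => ?_
            rw [hw]
            simp [Finset.sum_apply, Finset.mul_sum]
        _ = ∑ j, (∑ t, (bC i : Fin n → ZMod 3) t * (bD j : Fin n → ZMod 3) t) * v j := by
            rw [Finset.sum_comm]
            refine Finset.sum_congr rfl fun j _ => ?_
            rw [Finset.sum_mul]
            exact Finset.sum_congr rfl fun t _ => by ring
        _ = ∑ j, X i j * v j := Finset.sum_congr rfl fun j _ => by rw [hXij]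
        _ = 0 := hXv
    have hwD : w ∈ D := by
      refine Submodule.sum_mem _ fun j _ => Submodule.smul_mem _ _ (bD j).2
    have hwC : w ∈ C := by
      rw [h]
      intro x hx
      have hxeq : x = ∑ i, bC.repr ⟨x, hx⟩ i • (bC i : Fin n → ZMod 3) := by
        have hrep := bC.sum_repr ⟨x, hx⟩
        have := congrArg (Subtype.val) hrep
        exact this.symm.trans (by simp only [Submodule.coe_sum, Submodule.coe_smul])
      calc ∑ t, x t * w t
          = ∑ t, ∑ i, bC.repr ⟨x, hx⟩ i * ((bC i : Fin n → ZMod 3) t * w t) := by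
            refine Finset.sum_congr rfl fun t _ => ?_
            have hxt := congrFun hxeq t
            rw [Finset.sum_apply] at hxt
            rw [hxt, Finset.sum_mul]
            exact Finset.sum_congr rfl fun i _ => by simp [smul_eq_mul]; ring
        _ = ∑ i, bC.repr ⟨x, hx⟩ i * (∑ t, (bC i : Fin n → ZMod 3) t * w t) := by
            rw [Finset.sum_comm]
            exact Finset.sum_congr rfl fun i _ => by rw [Finset.mul_sum]
        _ = 0 := by simp [hcoord]
    have hw0 : w = 0 := by
      have hmem : w ∈ C ⊓ D := ⟨hwC, hwD⟩
      rw [hD.inf_eq_bot] at hmem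
      simpa using hmem
    have hsum0 : ∑ j, v j • bD j = (0 : D) := by
      apply Subtype.val_injective
      push_cast
      simpa [hw] using hw0
    have hvz : ∀ j, v j = 0 :=
      Fintype.linearIndependent_iff.mp bD.linearIndependent v hsum0
    exact hv0 (funext hvz)
  -- conclude in ZMod 3
  have hsq : X.det ^ 2 = (-1 : ZMod 3) ^ k * A'.det ^ 2 := by
    rw [← hdetG, ← hdet2, sq]
  have hkeven : k % 2 = 0 := by
    by_contra hodd
    have hO : Odd k := Nat.odd_iff.mpr (by omega)
    rw [hO.neg_one_pow] at hsq
    have hdec : ∀ a b : ZMod 3, a ≠ 0 → a ^ 2 ≠ -1 * b ^ 2 := by decide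
    exact hdec _ _ hX hsq
  exact ⟨k / 2, by omega⟩
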